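/- Let A be an n×m complex matrix and v a maximizer of ‖Ax‖_q/‖x‖_1 such that all components of v have equal nonzero absolute value and all nonzero components of Av have the same absolute value. Then v is an eigenvector of A*A. -/

import Mathlib

open scoped BigOperators ENNReal

/-- The Hölder `ℓ_p` norm of a vector in `ℂ^m`, for `p ∈ [1,∞]`. -/
noncomputable def lpNorm {m : ℕ} (p : ℝ≥0∞) (x : Fin m → ℂ) : ℝ :=
  if p = ⊤ then ⨆ i, ‖x i‖ else (∑ i, ‖x i‖ ^ p.toReal) ^ (1 / p.toReal)

/-- The operator norm of an `n × m` complex matrix induced by `ℓ_p` on `ℂ^m`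
and `ℓ_q` on `ℂ^n`. -/
noncomputable def opNorm {n m : ℕ} (p q : ℝ≥0∞) (A : Matrix (Fin n) (Fin m) ℂ) : ℝ :=
  ⨆ x : {x : Fin m → ℂ // x ≠ 0}, lpNorm q (A.mulVec x.1) / lpNorm p x.1

/-- The operator norm of an `n × m` complex matrix induced by general norms
`μ` on `ℂ^m` and `ν` on `ℂ^n`. -/
noncomputable def opNormGen {n m : ℕ} (μ : (Fin m → ℂ) → ℝ) (ν : (Fin n → ℂ) → ℝ)
    (A : Matrix (Fin n) (Fin m) ℂ) : ℝ :=
  ⨆ x : {x : Fin m → ℂ // x ≠ 0}, ν (A.mulVec x.1) / μ x.1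

lemma lpNorm_one_eq {m : ℕ} (x : Fin m → ℂ) : lpNorm 1 x = ∑ i, ‖x i‖ := by
  simp [lpNorm]

/-- Equality case: complex numbers with norms bounded by `c` summing to `m*c` are all `c`. -/
lemma sum_eq_of_norm_le {m : ℕ} (z : Fin m → ℂ) (c : ℝ)
    (h : ∀ i, ‖z i‖ ≤ c) (hs : ∑ i, z i = ((m : ℝ) * c : ℝ)) (i : Fin m) : z i = (c : ℂ) := by
  have habs : ∀ j, ‖z j‖ ≤ c := by
    intro j; exact h j
  have hre : ∑ j, (z j).re = (m : ℝ) * c := by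
    have := congrArg Complex.re hs
    simpa [Complex.re_sum] using this
  have hle : ∀ j, (z j).re ≤ c := fun j => (Complex.re_le_norm _).trans (habs j)
  have hsum0 : ∑ j : Fin m, (c - (z j).re) = 0 := by
    rw [Finset.sum_sub_distrib, hre, Finset.sum_const]
    simp [mul_comm]
  have heq : ∀ j : Fin m, (z j).re = c := by
    intro j
    have := (Finset.sum_eq_zero_iff_of_nonneg
      (fun j _ => sub_nonneg.2 (hle j))).1 hsum0 j (Finset.mem_univ j)
    linarith
  have habse : ‖z i‖ = c :=
    le_antisymm (habs i) ((heq i) ▸ Complex.re_le_norm (z i))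
  have him : (z i).im = 0 := by
    have h2 : (z i).re ^ 2 + (z i).im ^ 2 = c ^ 2 := by
      have := Complex.sq_norm (z i)
      rw [habse, Complex.normSq_apply] at this
      nlinarith
    have h3 : (z i).im ^ 2 = 0 := by
      have h4 := heq i
      rw [h4] at h2
      linarith
    exact pow_eq_zero_iff two_ne_zero |>.mp h3
  exact Complex.ext (by simp [heq i]) (by simp [him])

/-- Hölder with the constant-one vector. -/
lemma holder_ones {α : Type*} {S : Finset α} {b : α → ℝ} (hb : ∀ j ∈ S, 0 ≤ b j)
    {p : ℝ} (hp : 1 ≤ p) :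
    ∑ j ∈ S, b j ≤ (∑ j ∈ S, b j ^ p) ^ (1/p) * (S.card : ℝ) ^ (1 - 1/p) := by
  rcases eq_or_lt_of_le hp with h1 | h1
  · rw [← h1]
    simp [Real.rpow_one]
  · have hpq := Real.HolderConjugate.conjExponent h1
    have key := Real.inner_le_Lp_mul_Lq_of_nonneg (s := S) (f := b) (g := fun _ => 1)
      hpq hb (fun _ _ => zero_le_one)
    simp only [mul_one, Real.one_rpow, Finset.sum_const, nsmul_eq_mul] at key
    have hq1 : 1 / Real.conjExponent p = 1 - 1/p := by
      rw [Real.conjExponent, one_div_div]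
      field_simp
    rwa [hq1] at key

/-- A uniform pointwise bound gives a bound on the `ℓ_q` norm. -/
lemma lpNorm_le_of_forall_le {n : ℕ} {q : ℝ≥0∞} (hq : 1 ≤ q) {x : Fin n → ℂ} {c : ℝ}
    (hc : 0 ≤ c) (h : ∀ j, ‖x j‖ ≤ c) : lpNorm q x ≤ (n : ℝ) * c := by
  have hqr : q ≠ ⊤ → (1:ℝ) ≤ q.toReal := fun hqt => by
    rw [← ENNReal.toReal_one]; exact ENNReal.toReal_mono hqt hq
  rcases Nat.eq_zero_or_pos n with rfl | hn
  · rw [lpNorm]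
    split
    · simp
    · rename_i hqt
      have h1 : (1:ℝ)/q.toReal ≠ 0 := one_div_ne_zero (by linarith [hqr hqt])
      rw [Finset.univ_eq_empty, Finset.sum_empty, Real.zero_rpow h1]
      simp
  · have h1n : (1:ℝ) ≤ (n:ℝ) := Nat.one_le_cast.2 hn
    rw [lpNorm]
    split
    · have : Nonempty (Fin n) := ⟨⟨0, hn⟩⟩
      refine ciSup_le fun j => (h j).trans ?_
      nlinarith
    · rename_i hqt
      have hqr1 : (1:ℝ) ≤ q.toReal := hqr hqt
      have hqr0 : q.toReal ≠ 0 := by linarith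
      calc (∑ i, ‖x i‖ ^ q.toReal) ^ (1/q.toReal)
          ≤ (∑ _i : Fin n, c ^ q.toReal) ^ (1/q.toReal) := by
            apply Real.rpow_le_rpow
              (Finset.sum_nonneg fun i _ => Real.rpow_nonneg (norm_nonneg _) _)
              (Finset.sum_le_sum fun i _ => Real.rpow_le_rpow (norm_nonneg _) (h i) (by linarith))
              (by positivity)
        _ = (n:ℝ) ^ ((1:ℝ)/q.toReal) * c := by
            rw [Finset.sum_const, Finset.card_univ, Fintype.card_fin, nsmul_eq_mul,
              Real.mul_rpow (by positivity) (Real.rpow_nonneg hc _)]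
            congr 1
            rw [← Real.rpow_mul hc, mul_one_div, div_self hqr0, Real.rpow_one]
        _ ≤ (n:ℝ) * c := by
            refine mul_le_mul_of_nonneg_right ?_ hc
            have h2 : (1:ℝ)/q.toReal ≤ 1 := by
              rw [div_le_one (by linarith)]; exact hqr1
            calc (n:ℝ) ^ ((1:ℝ)/q.toReal) ≤ (n:ℝ) ^ (1:ℝ) :=
                  Real.rpow_le_rpow_of_exponent_le h1n h2
              _ = (n:ℝ) := Real.rpow_one _

lemma lpNorm_one_pos {m : ℕ} {x : Fin m → ℂ} (hx : x ≠ 0) : 0 < lpNorm 1 x := by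
  obtain ⟨i, hi⟩ : ∃ i, x i ≠ 0 := by
    by_contra hcon; push_neg at hcon; exact hx (funext hcon)
  rw [lpNorm_one_eq]
  exact lt_of_lt_of_le (norm_pos_iff.2 hi)
    (Finset.single_le_sum (fun _ _ => norm_nonneg _) (Finset.mem_univ i))

lemma opNorm_bddAbove {n m : ℕ} {q : ℝ≥0∞} (hq : 1 ≤ q) (A : Matrix (Fin n) (Fin m) ℂ) :
    BddAbove (Set.range fun x : {x : Fin m → ℂ // x ≠ 0} =>
      lpNorm q (A.mulVec x.1) / lpNorm 1 x.1) := by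
  refine ⟨(n:ℝ) * ∑ j, ∑ i, ‖A j i‖, ?_⟩
  rintro _ ⟨x, rfl⟩
  have hM0 : (0:ℝ) ≤ ∑ j, ∑ i, ‖A j i‖ :=
    Finset.sum_nonneg fun _ _ => Finset.sum_nonneg fun _ _ => norm_nonneg _
  have hx1 : 0 < lpNorm 1 x.1 := lpNorm_one_pos x.2
  rw [div_le_iff₀ hx1]
  have hpt : ∀ j, ‖A.mulVec x.1 j‖ ≤ (∑ j', ∑ i, ‖A j' i‖) * lpNorm 1 x.1 := by
    intro j
    have hAij : ∀ i, ‖A j i‖ ≤ ∑ j', ∑ i', ‖A j' i'‖ := by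
      intro i
      calc ‖A j i‖ ≤ ∑ i', ‖A j i'‖ :=
            Finset.single_le_sum (fun _ _ => norm_nonneg _) (Finset.mem_univ i)
        _ ≤ ∑ j', ∑ i', ‖A j' i'‖ := Finset.single_le_sum
            (f := fun j' => ∑ i', ‖A j' i'‖)
            (fun _ _ => Finset.sum_nonneg fun _ _ => norm_nonneg _) (Finset.mem_univ j)
    have hmv : A.mulVec x.1 j = ∑ i, A j i * x.1 i := rfl
    rw [hmv, lpNorm_one_eq, Finset.mul_sum]
    calc ‖∑ i, A j i * x.1 i‖ ≤ ∑ i, ‖A j i * x.1 i‖ := norm_sum_le _ _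
      _ ≤ ∑ i, (∑ j', ∑ i', ‖A j' i'‖) * ‖x.1 i‖ := by
          refine Finset.sum_le_sum fun i _ => ?_
          rw [norm_mul]
          exact mul_le_mul_of_nonneg_right (hAij i) (norm_nonneg _)
  calc lpNorm q (A.mulVec x.1) ≤ (n:ℝ) * ((∑ j, ∑ i, ‖A j i‖) * lpNorm 1 x.1) :=
        lpNorm_le_of_forall_le hq (by positivity) hpt
    _ = (n:ℝ) * (∑ j, ∑ i, ‖A j i‖) * lpNorm 1 x.1 := by ring


lemma lpNorm_nonneg {m : ℕ} (p : ℝ≥0∞) (x : Fin m → ℂ) : 0 ≤ lpNorm p x := by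
  rw [lpNorm]
  split
  · exact Real.iSup_nonneg fun i => norm_nonneg _
  · positivity


/-- Lemma 3.1 (case `p = 1`, `v ∈ K₁`): a maximizer `v` of `‖Ax‖_q/‖x‖_1`
all of whose components have equal nonzero absolute value, and such that
all nonzero components of `Av` have the same absolute value, is an
eigenvector of `A*A`. -/
theorem stmt_11 {n m : ℕ} (A : Matrix (Fin n) (Fin m) ℂ) (q : ℝ≥0∞) (hq : 1 ≤ q)
    (v : Fin m → ℂ) (hv : v ≠ 0)
    (hmax : lpNorm q (A.mulVec v) / lpNorm 1 v = opNorm 1 q A)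
    (h0 : ∀ i : Fin m, v i ≠ 0)
    (h1 : ∀ i j : Fin m, ‖v i‖ = ‖v j‖)
    (h2 : ∀ i j : Fin n, A.mulVec v i ≠ 0 → A.mulVec v j ≠ 0 →
      ‖A.mulVec v i‖ = ‖A.mulVec v j‖) :
    ∃ t : ℂ, (A.conjTranspose * A).mulVec v = t • v := by
  classical
  by_cases hy0 : A.mulVec v = 0
  · refine ⟨0, ?_⟩
    rw [← Matrix.mulVec_mulVec, hy0, Matrix.mulVec_zero, zero_smul]
  set y : Fin n → ℂ := A.mulVec v with hy
  obtain ⟨j₀, hj₀⟩ : ∃ j, y j ≠ 0 := by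
    by_contra hcon; push_neg at hcon; exact hy0 (funext hcon)
  have hm0 : m ≠ 0 := by rintro rfl; exact hv (funext fun i => i.elim0)
  have hmpos : 0 < (m:ℝ) := by
    exact_mod_cast Nat.pos_of_ne_zero hm0
  set i₀ : Fin m := ⟨0, Nat.pos_of_ne_zero hm0⟩ with hi₀
  set r : ℝ := ‖v i₀‖ with hr_def
  have hvr : ∀ i, ‖v i‖ = r := fun i => h1 i i₀
  have hr : 0 < r := norm_pos_iff.2 (h0 i₀)
  set s : ℝ := ‖y j₀‖ with hs_def
  have hs : 0 < s := norm_pos_iff.2 hj₀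
  have hys : ∀ j, y j ≠ 0 → ‖y j‖ = s := fun j hj => h2 j j₀ hj hj₀
  set S : Finset (Fin n) := Finset.univ.filter (fun j => y j ≠ 0) with hS
  set k : ℕ := S.card with hk_def
  have hkpos : 0 < (k:ℝ) := by
    have hj₀S : j₀ ∈ S := by simp [hS, hj₀]
    exact_mod_cast Finset.card_pos.2 ⟨j₀, hj₀S⟩
  have hL1 : lpNorm 1 v = (m:ℝ) * r := by
    rw [lpNorm_one_eq]
    simp [hvr, Finset.sum_const, mul_comm]
  have hL1pos : 0 < lpNorm 1 v := by rw [hL1]; positivity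
  set lam : ℝ := opNorm 1 q A with hlam_def
  have hlam : lpNorm q y = lam * ((m:ℝ) * r) := by
    rw [← hL1]
    exact (div_eq_iff (ne_of_gt hL1pos)).1 hmax
  have hlam0 : 0 ≤ lam := by
    rw [← hmax]
    exact div_nonneg (lpNorm_nonneg _ _) hL1pos.le
  have hbdd := opNorm_bddAbove (q := q) hq A
  -- column norms are bounded by the operator norm
  have hcol : ∀ i : Fin m, lpNorm q (fun j => A j i) ≤ lam := by
    intro i
    have hne : (Pi.single i 1 : Fin m → ℂ) ≠ 0 := by
      intro hcon
      have := congrFun hcon i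
      rw [Pi.single_eq_same] at this
      exact one_ne_zero this
    have hle := le_ciSup hbdd ⟨Pi.single i 1, hne⟩
    have h1' : lpNorm 1 (Pi.single i 1 : Fin m → ℂ) = 1 := by
      rw [lpNorm_one_eq]
      simp [Pi.single_apply, apply_ite (fun z : ℂ => ‖z‖)]
    have hcolv : A.mulVec (Pi.single i 1) = fun j => A j i := by
      funext j
      simp [Matrix.mulVec_single]
    rw [hlam_def]
    simp only [opNorm]
    simpa [h1', hcolv] using hle
  -- the vector A* y
  set w : Fin m → ℂ := fun i => ∑ j, (starRingEnd ℂ) (A j i) * y j with hw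
  -- uniform bound on entries of w, with the exact constant
  have hWb : ∀ i, ‖w i‖ ≤ s * ∑ j ∈ S, ‖A j i‖ := by
    intro i
    calc ‖w i‖ ≤ ∑ j, ‖(starRingEnd ℂ) (A j i) * y j‖ := norm_sum_le _ _
      _ = ∑ j ∈ S, ‖(starRingEnd ℂ) (A j i) * y j‖ := by
          refine (Finset.sum_subset (Finset.filter_subset _ _) ?_).symm
          intro j _ hj
          have : y j = 0 := by simpa [hS] using hj
          simp [this]
      _ = ∑ j ∈ S, ‖A j i‖ * s := by
          refine Finset.sum_congr rfl fun j hj => ?_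
          have hyj : y j ≠ 0 := by simpa [hS] using hj
          rw [norm_mul, RCLike.norm_conj, hys j hyj]
      _ = s * ∑ j ∈ S, ‖A j i‖ := by rw [← Finset.sum_mul]; ring
  -- main estimate, by cases on q
  have main : ∃ d : ℝ, 0 ≤ d ∧ (∀ i, ‖w i‖ ≤ d) ∧ (m:ℝ) * (r * d) = s^2 * (k:ℝ) := by
    by_cases hqt : q = ⊤
    · refine ⟨s * ((k:ℝ) * lam), by positivity, fun i => ?_, ?_⟩
      · refine (hWb i).trans ?_
        refine mul_le_mul_of_nonneg_left ?_ hs.le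
        have hsup : ∀ j, ‖A j i‖ ≤ lam := by
          intro j
          refine le_trans ?_ (hcol i)
          rw [lpNorm, if_pos hqt]
          exact le_ciSup (f := fun j' => ‖A j' i‖) (Finite.bddAbove_range _) j
        calc ∑ j ∈ S, ‖A j i‖ ≤ ∑ _j ∈ S, lam := Finset.sum_le_sum fun j _ => hsup j
          _ = (k:ℝ) * lam := by rw [Finset.sum_const, ← hk_def, nsmul_eq_mul]
      · -- lpNorm ⊤ y = s
        have hyq : lpNorm q y = s := by
          rw [lpNorm, if_pos hqt]
          have hne : Nonempty (Fin n) := ⟨j₀⟩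
          refine le_antisymm (ciSup_le fun j => ?_) (le_ciSup (f := fun j => ‖y j‖) (Finite.bddAbove_range _) j₀)
          by_cases hj : y j = 0
          · simp [hj, hs.le]
          · exact (hys j hj).le
        have hsl : s = lam * ((m:ℝ) * r) := by rw [← hyq, hlam]
        calc (m:ℝ) * (r * (s * ((k:ℝ) * lam)))
            = (s * (k:ℝ)) * (lam * ((m:ℝ) * r)) := by ring
          _ = (s * (k:ℝ)) * s := by rw [← hsl]
          _ = s^2 * (k:ℝ) := by ring
    · have hqr : (1:ℝ) ≤ q.toReal := by
        rw [← ENNReal.toReal_one]; exact ENNReal.toReal_mono hqt hq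
      have hqr0 : q.toReal ≠ 0 := by linarith
      set e : ℝ := 1 - 1/q.toReal with he
      have he0 : 0 ≤ e := by
        rw [he, sub_nonneg, div_le_one (by linarith)]; exact hqr
      refine ⟨s * ((k:ℝ) ^ e * lam), by positivity, fun i => ?_, ?_⟩
      · refine (hWb i).trans ?_
        refine mul_le_mul_of_nonneg_left ?_ hs.le
        calc ∑ j ∈ S, ‖A j i‖
            ≤ (∑ j ∈ S, ‖A j i‖ ^ q.toReal) ^ (1/q.toReal) * (S.card : ℝ) ^ e :=
              holder_ones (fun _ _ => norm_nonneg _) hqr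
          _ ≤ (∑ j, ‖A j i‖ ^ q.toReal) ^ (1/q.toReal) * (k:ℝ) ^ e := by
              rw [← hk_def]
              refine mul_le_mul_of_nonneg_right ?_ (Real.rpow_nonneg hkpos.le _)
              refine Real.rpow_le_rpow (Finset.sum_nonneg fun _ _ =>
                Real.rpow_nonneg (norm_nonneg _) _) ?_ (by positivity)
              exact Finset.sum_le_sum_of_subset_of_nonneg (Finset.filter_subset _ _)
                (fun _ _ _ => Real.rpow_nonneg (norm_nonneg _) _)
          _ ≤ lam * (k:ℝ) ^ e := by
              refine mul_le_mul_of_nonneg_right ?_ (Real.rpow_nonneg hkpos.le _)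
              have := hcol i
              rw [lpNorm, if_neg hqt] at this
              exact this
          _ = (k:ℝ) ^ e * lam := mul_comm _ _
      · -- lpNorm q y = s * k^(1/q.toReal)
        have hyq : lpNorm q y = s * (k:ℝ) ^ ((1:ℝ)/q.toReal) := by
          rw [lpNorm, if_neg hqt]
          have hsum : ∑ j, ‖y j‖ ^ q.toReal = (k:ℝ) * s ^ q.toReal := by
            rw [← Finset.sum_subset (Finset.filter_subset (fun j => y j ≠ 0) Finset.univ)
              (by intro j _ hj
                  have : y j = 0 := by simpa using hj
                  simp [this, Real.zero_rpow hqr0])]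
            rw [Finset.sum_congr rfl (fun j hj => by
              rw [hys j (by simpa using (Finset.mem_filter.1 hj).2)])]
            rw [Finset.sum_const, ← hS, ← hk_def, nsmul_eq_mul]
          rw [hsum, Real.mul_rpow hkpos.le (Real.rpow_nonneg hs.le _),
            ← Real.rpow_mul hs.le, mul_one_div, div_self hqr0, Real.rpow_one, mul_comm]
        have hsl : s * (k:ℝ) ^ ((1:ℝ)/q.toReal) = lam * ((m:ℝ) * r) := by
          rw [← hyq, hlam]
        have hkk : (k:ℝ) ^ e * (k:ℝ) ^ ((1:ℝ)/q.toReal) = (k:ℝ) := by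
          rw [← Real.rpow_add hkpos, he, sub_add_cancel, Real.rpow_one]
        calc (m:ℝ) * (r * (s * ((k:ℝ) ^ e * lam)))
            = (s * (k:ℝ) ^ e) * (lam * ((m:ℝ) * r)) := by ring
          _ = (s * (k:ℝ) ^ e) * (s * (k:ℝ) ^ ((1:ℝ)/q.toReal)) := by rw [← hsl]
          _ = s^2 * ((k:ℝ) ^ e * (k:ℝ) ^ ((1:ℝ)/q.toReal)) := by ring
          _ = s^2 * (k:ℝ) := by rw [hkk]
  obtain ⟨d, hd0, hdb, hmd⟩ := main
  -- the scalar-product identity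
  have hsum : ∑ i, (starRingEnd ℂ) (v i) * w i = ((s^2 * (k:ℝ) : ℝ) : ℂ) := by
    have e1 : ∀ i, (starRingEnd ℂ) (v i) * w i
        = ∑ j, (starRingEnd ℂ) (A j i * v i) * y j := by
      intro i
      rw [hw]
      simp only
      rw [Finset.mul_sum]
      exact Finset.sum_congr rfl fun j _ => by rw [map_mul]; ring
    calc ∑ i, (starRingEnd ℂ) (v i) * w i
        = ∑ i, ∑ j, (starRingEnd ℂ) (A j i * v i) * y j :=
          Finset.sum_congr rfl fun i _ => e1 i
      _ = ∑ j, ∑ i, (starRingEnd ℂ) (A j i * v i) * y j := Finset.sum_comm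
      _ = ∑ j, ((‖y j‖^2 : ℝ) : ℂ) := by
          refine Finset.sum_congr rfl fun j _ => ?_
          rw [← Finset.sum_mul, ← map_sum]
          have hyj : ∑ i, A j i * v i = y j := rfl
          rw [hyj, mul_comm, Complex.mul_conj, Complex.normSq_eq_norm_sq]
      _ = ((∑ j, ‖y j‖^2 : ℝ) : ℂ) := by rw [Complex.ofReal_sum]
      _ = ((s^2 * (k:ℝ) : ℝ) : ℂ) := by
          congr 1
          rw [← Finset.sum_subset (Finset.filter_subset (fun j => y j ≠ 0) Finset.univ)
            (by intro j _ hj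
                have : y j = 0 := by simpa using hj
                simp [this])]
          rw [Finset.sum_congr rfl (fun j hj => by
            rw [hys j (by simpa using (Finset.mem_filter.1 hj).2)])]
          rw [Finset.sum_const, ← hS, ← hk_def, nsmul_eq_mul]
          ring
  have hz : ∀ i, (starRingEnd ℂ) (v i) * w i = ((r * d : ℝ) : ℂ) := by
    refine sum_eq_of_norm_le _ _ (fun i => ?_) ?_
    · rw [norm_mul, RCLike.norm_conj, hvr i]
      exact mul_le_mul_of_nonneg_left (hdb i) hr.le
    · rw [hsum]
      norm_cast
      linarith [hmd]
  refine ⟨((d / r : ℝ) : ℂ), ?_⟩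
  funext i
  have hwi : ((A.conjTranspose * A).mulVec v) i = w i := by
    rw [← Matrix.mulVec_mulVec]
    rw [hw]
    simp [Matrix.mulVec, dotProduct, Matrix.conjTranspose_apply, hy]
  have hvv : v i * (starRingEnd ℂ) (v i) = ((r^2 : ℝ) : ℂ) := by
    rw [Complex.mul_conj, Complex.normSq_eq_norm_sq]
    norm_cast
    rw [hvr i]
  have key : ((r^2 : ℝ) : ℂ) * w i = ((r * d : ℝ) : ℂ) * v i := by
    calc ((r^2 : ℝ) : ℂ) * w i = v i * ((starRingEnd ℂ) (v i) * w i) := by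
          rw [← mul_assoc, hvv]
      _ = v i * ((r * d : ℝ) : ℂ) := by rw [hz i]
      _ = ((r * d : ℝ) : ℂ) * v i := mul_comm _ _
  have hr2 : ((r^2 : ℝ) : ℂ) ≠ 0 := by
    exact_mod_cast pow_ne_zero 2 hr.ne'
  rw [hwi, Pi.smul_apply, smul_eq_mul]
  apply mul_left_cancel₀ hr2
  rw [key, ← mul_assoc]
  have hrne : r ≠ 0 := hr.ne'
  have hc : ((r * d : ℝ) : ℂ) = ((r ^ 2 : ℝ) : ℂ) * ((d / r : ℝ) : ℂ) := by
    rw [← Complex.ofReal_mul]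
    congr 1
    field_simp
    try ring
  rw [hc]
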